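/- Second derivative of the block entropy at the low-SNR point (Appendix E): define R_n(δ) = ∑_{(z_1,…,z_n)∈{0,1}^n} p_Z^δ(z_1⋯z_n) log p_Z^δ(z_1⋯z_n). Then for every n ≥ 1, d²R_n/dδ² |_{δ=0} = 4n ( p_X(0) − p_X(1) )² = 4n ( (π_10 − π_01)/(π_10 + π_01) )². -/

import Mathlib

/-- Stationary probability of symbol `0` (coded `false`): `p_X(0) = π_10/(π_01+π_10)`. -/
noncomputable def pX (π01 π10 : ℝ) (b : Bool) : ℝ :=
  if b then π01 / (π01 + π10) else π10 / (π01 + π10)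

/-- `p_Z^δ(z_1⋯z_n)`: the probability that the first `n` outputs of the stationary Markov
chain with transition matrix `Π` observed through a binary symmetric channel with crossover
probability `ε = 1/2 − δ` equal `z_1,…,z_n`; computed by the forward recursion
`a_k = p_E(z_k)(π_00 a_{k−1} + π_10 b_{k−1})`, `b_k = p_E(1−z_k)(π_01 a_{k−1} + π_11 b_{k−1})`
with `p_E(0) = 1/2 + δ`, `p_E(1) = 1/2 − δ`, and `p_Z^δ = a_n + b_n`. -/
noncomputable def pZ (π00 π01 π10 π11 : ℝ) (δ : ℝ) (w : List Bool) : ℝ :=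
  (w.foldl
    (fun ab i =>
      ((if i then 1 / 2 - δ else 1 / 2 + δ) * (π00 * ab.1 + π10 * ab.2),
       (if i then 1 / 2 + δ else 1 / 2 - δ) * (π01 * ab.1 + π11 * ab.2)))
    (π10 / (π01 + π10), π01 / (π01 + π10))).1 +
  (w.foldl
    (fun ab i =>
      ((if i then 1 / 2 - δ else 1 / 2 + δ) * (π00 * ab.1 + π10 * ab.2),
       (if i then 1 / 2 + δ else 1 / 2 - δ) * (π01 * ab.1 + π11 * ab.2)))
    (π10 / (π01 + π10), π01 / (π01 + π10))).2

/-- `R_n(δ) = ∑_{(z_1,…,z_n)} p_Z^δ(z_1⋯z_n) log p_Z^δ(z_1⋯z_n)`. -/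
noncomputable def Rn (π00 π01 π10 π11 : ℝ) (n : ℕ) (δ : ℝ) : ℝ :=
  ∑ w : Fin n → Bool,
    pZ π00 π01 π10 π11 δ (List.ofFn w) * Real.log (pZ π00 π01 π10 π11 δ (List.ofFn w))


namespace SndDerivAux
open scoped ContDiff

noncomputable def Ff (π00 π01 π10 π11 : ℝ) (l : List Bool) (δ : ℝ) : ℝ × ℝ :=
  l.foldl
    (fun ab i =>
      ((if i then 1 / 2 - δ else 1 / 2 + δ) * (π00 * ab.1 + π10 * ab.2),
       (if i then 1 / 2 + δ else 1 / 2 - δ) * (π01 * ab.1 + π11 * ab.2)))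
    (π10 / (π01 + π10), π01 / (π01 + π10))

lemma pZ_eq (π00 π01 π10 π11 δ : ℝ) (w : List Bool) :
    pZ π00 π01 π10 π11 δ w = (Ff π00 π01 π10 π11 w δ).1 + (Ff π00 π01 π10 π11 w δ).2 := rfl

lemma Ff_concat (π00 π01 π10 π11 : ℝ) (l : List Bool) (b : Bool) (δ : ℝ) :
    Ff π00 π01 π10 π11 (l ++ [b]) δ =
      ((if b then 1 / 2 - δ else 1 / 2 + δ) *
          (π00 * (Ff π00 π01 π10 π11 l δ).1 + π10 * (Ff π00 π01 π10 π11 l δ).2),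
       (if b then 1 / 2 + δ else 1 / 2 - δ) *
          (π01 * (Ff π00 π01 π10 π11 l δ).1 + π11 * (Ff π00 π01 π10 π11 l δ).2)) := by
  simp [Ff, List.foldl_append]

lemma contDiff_Ff (π00 π01 π10 π11 : ℝ) (l : List Bool) :
    ContDiff ℝ ∞ (fun δ => (Ff π00 π01 π10 π11 l δ).1) ∧
    ContDiff ℝ ∞ (fun δ => (Ff π00 π01 π10 π11 l δ).2) := by
  induction l using List.reverseRecOn with
  | nil => exact ⟨contDiff_const, contDiff_const⟩
  | append_singleton l b ih =>
    obtain ⟨hA, hB⟩ := ih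
    simp only [Ff_concat]
    cases b <;> simp only [if_true, if_false, Bool.false_eq_true] <;>
      exact ⟨by fun_prop, by fun_prop⟩


noncomputable def eps (b : Bool) : ℝ := if b then -1 else 1

noncomputable def csum (l : List Bool) : ℝ := (l.map eps).sum

lemma csum_concat (l : List Bool) (b : Bool) : csum (l ++ [b]) = csum l + eps b := by
  simp [csum]

section Main

variable {π00 π01 π10 π11 : ℝ}
  (hrow0 : π00 + π01 = 1) (hrow1 : π10 + π11 = 1) (hs : 0 < π01 + π10)

include hrow0 hrow1 hs in
lemma Ff_zero (l : List Bool) :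
    Ff π00 π01 π10 π11 l 0 =
      ((1/2) ^ l.length * (π10 / (π01 + π10)), (1/2) ^ l.length * (π01 / (π01 + π10))) := by
  have hs' : π01 + π10 ≠ 0 := ne_of_gt hs
  induction l using List.reverseRecOn with
  | nil => simp [Ff]
  | append_singleton l b ih =>
    have h1 : π00 * (π10 / (π01 + π10)) + π10 * (π01 / (π01 + π10)) = π10 / (π01 + π10) := by
      field_simp
      linear_combination π10 * hrow0
    have h2 : π01 * (π10 / (π01 + π10)) + π11 * (π01 / (π01 + π10)) = π01 / (π01 + π10) := by
      field_simp
      linear_combination π01 * hrow1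
    rw [Ff_concat, ih]
    have hb1 : (if b then (1:ℝ)/2 - 0 else 1/2 + 0) = 1/2 := by cases b <;> norm_num
    have hb2 : (if b then (1:ℝ)/2 + 0 else 1/2 - 0) = 1/2 := by cases b <;> norm_num
    rw [hb1, hb2]
    simp only [List.length_append, List.length_cons, List.length_nil, pow_succ]
    refine Prod.ext ?_ ?_
    · show 1 / 2 * (π00 * ((1 / 2) ^ l.length * (π10 / (π01 + π10))) + π10 * ((1 / 2) ^ l.length * (π01 / (π01 + π10)))) = (1 / 2) ^ l.length * (1 / 2) * (π10 / (π01 + π10))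
      linear_combination ((1:ℝ)/2)^l.length * (1/2) * h1
    · show 1 / 2 * (π01 * ((1 / 2) ^ l.length * (π10 / (π01 + π10))) + π11 * ((1 / 2) ^ l.length * (π01 / (π01 + π10)))) = (1 / 2) ^ l.length * (1 / 2) * (π01 / (π01 + π10))
      linear_combination ((1:ℝ)/2)^l.length * (1/2) * h2


include hrow0 hrow1 hs in
lemma Ff_deriv (l : List Bool) :
    ∃ a' b' : ℝ, HasDerivAt (fun δ => (Ff π00 π01 π10 π11 l δ).1) a' 0 ∧
      HasDerivAt (fun δ => (Ff π00 π01 π10 π11 l δ).2) b' 0 ∧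
      a' + b' = 2 * ((π10 - π01) / (π01 + π10)) * (1/2) ^ l.length * csum l := by
  induction l using List.reverseRecOn with
  | nil =>
    refine ⟨0, 0, hasDerivAt_const _ _, hasDerivAt_const _ _, by simp [csum]⟩
  | append_singleton l b ih =>
    obtain ⟨a', b', hA, hB, hsum⟩ := ih
    have hpre1 : HasDerivAt (fun δ : ℝ => if b then 1/2 - δ else 1/2 + δ) (eps b) 0 := by
      cases b
      · simpa [eps] using (hasDerivAt_id (0:ℝ)).const_add (1/2 : ℝ)
      · simpa [eps] using (hasDerivAt_id (0:ℝ)).const_sub (1/2 : ℝ)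
    have hpre2 : HasDerivAt (fun δ : ℝ => if b then 1/2 + δ else 1/2 - δ) (-eps b) 0 := by
      cases b
      · simpa [eps] using (hasDerivAt_id (0:ℝ)).const_sub (1/2 : ℝ)
      · simpa [eps] using (hasDerivAt_id (0:ℝ)).const_add (1/2 : ℝ)
    have hinner1 : HasDerivAt
        (fun δ => π00 * (Ff π00 π01 π10 π11 l δ).1 + π10 * (Ff π00 π01 π10 π11 l δ).2)
        (π00 * a' + π10 * b') 0 := (hA.const_mul π00).add (hB.const_mul π10)
    have hinner2 : HasDerivAt
        (fun δ => π01 * (Ff π00 π01 π10 π11 l δ).1 + π11 * (Ff π00 π01 π10 π11 l δ).2)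
        (π01 * a' + π11 * b') 0 := (hA.const_mul π01).add (hB.const_mul π11)
    have k1 := hpre1.mul hinner1
    have k2 := hpre2.mul hinner2
    have hz := Ff_zero hrow0 hrow1 hs (π00 := π00) (π11 := π11) l
    have hval1 : (Ff π00 π01 π10 π11 l 0).1 = (1/2) ^ l.length * (π10 / (π01 + π10)) := by
      rw [hz]
    have hval2 : (Ff π00 π01 π10 π11 l 0).2 = (1/2) ^ l.length * (π01 / (π01 + π10)) := by
      rw [hz]
    have hpre10 : (if b then 1/2 - (0:ℝ) else 1/2 + 0) = 1/2 := by cases b <;> norm_num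
    have hpre20 : (if b then 1/2 + (0:ℝ) else 1/2 - 0) = 1/2 := by cases b <;> norm_num
    rw [hpre10] at k1
    rw [hpre20] at k2
    refine ⟨eps b * (π00 * (Ff π00 π01 π10 π11 l 0).1 + π10 * (Ff π00 π01 π10 π11 l 0).2)
        + 1/2 * (π00 * a' + π10 * b'),
      -eps b * (π01 * (Ff π00 π01 π10 π11 l 0).1 + π11 * (Ff π00 π01 π10 π11 l 0).2)
        + 1/2 * (π01 * a' + π11 * b'), ?_, ?_, ?_⟩
    · simp only [Ff_concat]
      exact k1
    · simp only [Ff_concat]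
      exact k2
    · rw [hval1, hval2, csum_concat]
      simp only [List.length_append, List.length_cons, List.length_nil, pow_succ]
      linear_combination (a'/2) * hrow0 + (b'/2) * hrow1 + (1/2) * hsum
        + (eps b * (1/2:ℝ)^l.length * π10 / (π01+π10)) * hrow0
        - (eps b * (1/2:ℝ)^l.length * π01 / (π01+π10)) * hrow1

end Main

def snocEquiv (n : ℕ) : ((Fin n → Bool) × Bool) ≃ (Fin (n+1) → Bool) where
  toFun p := Fin.snoc p.1 p.2
  invFun w := (fun i => w i.castSucc, w (Fin.last n))
  left_inv p := by
    refine Prod.ext ?_ ?_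
    · funext i; simp
    · simp
  right_inv w := by
    funext i
    refine Fin.lastCases ?_ (fun j => ?_) i <;> simp

lemma ofFn_snoc' {n : ℕ} (v : Fin n → Bool) (b : Bool) :
    List.ofFn (Fin.snoc v b) = List.ofFn v ++ [b] := by
  rw [List.ofFn_succ']
  simp only [Fin.snoc_castSucc, Fin.snoc_last, List.concat_eq_append]

lemma sum_snoc (g : List Bool → ℝ) (n : ℕ) :
    ∑ w : Fin (n+1) → Bool, g (List.ofFn w)
      = ∑ v : Fin n → Bool, (g (List.ofFn v ++ [false]) + g (List.ofFn v ++ [true])) := by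
  rw [← (snocEquiv n).sum_comp (fun w => g (List.ofFn w)), Fintype.sum_prod_type]
  refine Finset.sum_congr rfl fun v _ => ?_
  rw [Fintype.sum_bool]
  simp only [snocEquiv, Equiv.coe_fn_mk, ofFn_snoc']
  ring

lemma sum_csum_sq (n : ℕ) :
    ∑ w : Fin n → Bool, (csum (List.ofFn w))^2 = (n : ℝ) * 2^n := by
  induction n with
  | zero => simp [csum]
  | succ n ih =>
    rw [sum_snoc (fun l => (csum l)^2) n]
    have : ∀ v : Fin n → Bool,
        (csum (List.ofFn v ++ [false]))^2 + (csum (List.ofFn v ++ [true]))^2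
          = 2 * (csum (List.ofFn v))^2 + 2 := by
      intro v
      rw [csum_concat, csum_concat]
      simp only [eps, if_true, if_false, Bool.false_eq_true]
      ring
    rw [Finset.sum_congr rfl (fun v _ => this v), Finset.sum_add_distrib,
      Finset.sum_const, ← Finset.mul_sum, ih]
    have hcard : (Finset.univ : Finset (Fin n → Bool)).card = 2^n := by
      simp [Fintype.card_fun]
    rw [hcard]
    push_cast
    ring

section Main2

variable {π00 π01 π10 π11 : ℝ}
  (hrow0 : π00 + π01 = 1) (hrow1 : π10 + π11 = 1) (hs : 0 < π01 + π10)

include hrow0 hrow1 in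
lemma pZ_pair (δ : ℝ) (l : List Bool) :
    pZ π00 π01 π10 π11 δ (l ++ [false]) + pZ π00 π01 π10 π11 δ (l ++ [true])
      = pZ π00 π01 π10 π11 δ l := by
  simp only [pZ_eq, Ff_concat, if_false, if_true, Bool.false_eq_true]
  linear_combination (Ff π00 π01 π10 π11 l δ).1 * hrow0 + (Ff π00 π01 π10 π11 l δ).2 * hrow1

include hrow0 hrow1 hs in
lemma sum_pZ (δ : ℝ) : ∀ n : ℕ, ∑ w : Fin n → Bool, pZ π00 π01 π10 π11 δ (List.ofFn w) = 1 := by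
  intro n
  induction n with
  | zero =>
    have h1 : pZ π00 π01 π10 π11 δ [] = 1 := by
      have hs' : π01 + π10 ≠ 0 := ne_of_gt hs
      show π10 / (π01 + π10) + π01 / (π01 + π10) = 1
      field_simp
      ring
    simpa [List.ofFn_zero] using h1
  | succ n ih =>
    rw [sum_snoc (fun l => pZ π00 π01 π10 π11 δ l) n]
    rw [Finset.sum_congr rfl (fun v _ => pZ_pair hrow0 hrow1 δ (List.ofFn v))]
    exact ih

end Main2

end SndDerivAux

open SndDerivAux

/-- Appendix E: second derivative of the block entropy sum at the low-SNR point: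
`d²R_n/dδ²|_{δ=0} = 4n((π_10 − π_01)/(π_10 + π_01))² = 4n(p_X(0) − p_X(1))²`. -/
theorem second_deriv_Rn_at_half (π00 π01 π10 π11 : ℝ)
    (h00 : 0 < π00) (h00' : π00 < 1) (h01 : 0 < π01) (h01' : π01 < 1)
    (h10 : 0 < π10) (h10' : π10 < 1) (h11 : 0 < π11) (h11' : π11 < 1)
    (hrow0 : π00 + π01 = 1) (hrow1 : π10 + π11 = 1) :
    ∀ n : ℕ, 1 ≤ n →
      iteratedDeriv 2 (Rn π00 π01 π10 π11 n) 0 =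
        4 * n * ((π10 - π01) / (π10 + π01)) ^ 2 := by
  intro n _
  have hs : 0 < π01 + π10 := by linarith
  have hs' : π01 + π10 ≠ 0 := ne_of_gt hs
  set Δ : ℝ := (π10 - π01) / (π01 + π10) with hΔ
  set f : (Fin n → Bool) → ℝ → ℝ := fun w δ => pZ π00 π01 π10 π11 δ (List.ofFn w) with hf
  -- smoothness facts
  have hsm : ∀ w, ContDiff ℝ ((⊤ : ℕ∞) : WithTop ℕ∞) (f w) := by
    intro w
    have h := contDiff_Ff π00 π01 π10 π11 (List.ofFn w)
    exact h.1.add h.2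
  have h1le : (1 : WithTop ℕ∞) ≤ ((⊤ : ℕ∞) : WithTop ℕ∞) := by exact_mod_cast le_top
  have hdiff : ∀ w, Differentiable ℝ (f w) := fun w => (hsm w).differentiable (ne_of_gt (lt_of_lt_of_le zero_lt_one h1le))
  have hd1 : ∀ w, Differentiable ℝ (deriv (f w)) := by
    intro w
    exact ((contDiff_infty_iff_deriv.mp (hsm w)).2).differentiable (ne_of_gt (lt_of_lt_of_le zero_lt_one h1le))
  -- value at 0
  have hf0 : ∀ w, f w 0 = (1/2 : ℝ)^n := by
    intro w
    have hz := Ff_zero hrow0 hrow1 hs (List.ofFn w)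
    have : f w 0 = (Ff π00 π01 π10 π11 (List.ofFn w) 0).1
        + (Ff π00 π01 π10 π11 (List.ofFn w) 0).2 := rfl
    rw [this, hz]
    simp only [List.length_ofFn]
    field_simp
    ring
  have hf0pos : (0:ℝ) < (1/2 : ℝ)^n := by positivity
  -- first derivative at 0
  have hd0 : ∀ w, deriv (f w) 0 = 2 * Δ * (1/2:ℝ)^n * csum (List.ofFn w) := by
    intro w
    obtain ⟨a', b', hA, hB, hab⟩ := Ff_deriv hrow0 hrow1 hs (List.ofFn w)
    have : HasDerivAt (f w) (a' + b') 0 := hA.add hB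
    rw [this.deriv, hab, List.length_ofFn]
  -- positivity near 0
  have hev : ∀ᶠ δ in nhds 0, ∀ w, 0 < f w δ := by
    rw [Filter.eventually_all]
    intro w
    have hc : ContinuousAt (f w) 0 := ((hsm w).continuous).continuousAt
    have : (0:ℝ) < f w 0 := by rw [hf0 w]; exact hf0pos
    exact hc.eventually (eventually_gt_nhds this)
  -- derivative of Rn near 0
  have hRn : Rn π00 π01 π10 π11 n = fun δ => ∑ w, f w δ * Real.log (f w δ) := rfl
  have hRd : deriv (Rn π00 π01 π10 π11 n)
      =ᶠ[nhds 0] fun δ => ∑ w, deriv (f w) δ * (Real.log (f w δ) + 1) := by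
    filter_upwards [hev] with δ hδ
    have hterm : ∀ w ∈ Finset.univ, HasDerivAt (fun x => f w x * Real.log (f w x))
        (deriv (f w) δ * (Real.log (f w δ) + 1)) δ := by
      intro w _
      have h1 : HasDerivAt (f w) (deriv (f w) δ) δ := ((hdiff w) δ).hasDerivAt
      have h2 : HasDerivAt (fun x => Real.log (f w x)) ((f w δ)⁻¹ * deriv (f w) δ) δ :=
        (Real.hasDerivAt_log (ne_of_gt (hδ w))).comp δ h1
      have h3 := h1.mul h2
      exact h3.congr_deriv (by rw [mul_inv_cancel_left₀ (ne_of_gt (hδ w))]; ring)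
    have := (HasDerivAt.fun_sum hterm)
    rw [hRn]
    exact this.deriv
  -- second derivative
  have h2eq : iteratedDeriv 2 (Rn π00 π01 π10 π11 n) 0
      = deriv (deriv (Rn π00 π01 π10 π11 n)) 0 := by
    rw [iteratedDeriv_succ, iteratedDeriv_one]
  rw [h2eq, hRd.deriv_eq]
  -- derivative of the sum at 0
  have hterm2 : ∀ w ∈ Finset.univ, HasDerivAt
      (fun δ => deriv (f w) δ * (Real.log (f w δ) + 1))
      (deriv (deriv (f w)) 0 * (Real.log (f w 0) + 1)
        + deriv (f w) 0 * ((f w 0)⁻¹ * deriv (f w) 0)) 0 := by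
    intro w _
    have h1 : HasDerivAt (deriv (f w)) (deriv (deriv (f w)) 0) 0 := ((hd1 w) 0).hasDerivAt
    have hne : f w 0 ≠ 0 := by rw [hf0 w]; positivity
    have h2 : HasDerivAt (fun δ => Real.log (f w δ) + 1) ((f w 0)⁻¹ * deriv (f w) 0) 0 :=
      ((Real.hasDerivAt_log hne).comp 0 ((hdiff w 0).hasDerivAt)).add_const 1
    exact h1.mul h2
  rw [(HasDerivAt.fun_sum hterm2).deriv]
  -- the sum of second derivatives vanishes
  have hsum1 : ∀ δ : ℝ, ∑ w, deriv (f w) δ = 0 := by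
    intro δ
    have h1 : HasDerivAt (fun x => ∑ w, f w x) (∑ w, deriv (f w) δ) δ :=
      HasDerivAt.fun_sum (fun w _ => ((hdiff w) δ).hasDerivAt)
    have h2 : (fun x => ∑ w, f w x) = fun _ => (1:ℝ) := by
      funext x
      exact sum_pZ hrow0 hrow1 hs x n
    rw [h2] at h1
    exact h1.unique (hasDerivAt_const δ 1)
  have hsum2 : ∑ w, deriv (deriv (f w)) 0 = 0 := by
    have h1 : HasDerivAt (fun δ => ∑ w, deriv (f w) δ) (∑ w, deriv (deriv (f w)) 0) 0 :=
      HasDerivAt.fun_sum (fun w _ => ((hd1 w) 0).hasDerivAt)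
    have h2 : (fun δ => ∑ w, deriv (f w) δ) = fun _ => (0:ℝ) := funext hsum1
    rw [h2] at h1
    exact h1.unique (hasDerivAt_const 0 0)
  rw [Finset.sum_add_distrib]
  have e1 : ∑ w, deriv (deriv (f w)) 0 * (Real.log (f w 0) + 1) = 0 := by
    have : ∀ w ∈ Finset.univ, deriv (deriv (f w)) 0 * (Real.log (f w 0) + 1)
        = deriv (deriv (f w)) 0 * (Real.log ((1/2:ℝ)^n) + 1) := by
      intro w _; rw [hf0 w]
    rw [Finset.sum_congr rfl this, ← Finset.sum_mul, hsum2, zero_mul]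
  have e2 : ∑ w, deriv (f w) 0 * ((f w 0)⁻¹ * deriv (f w) 0)
      = 4 * n * Δ^2 := by
    have hstep : ∀ w ∈ Finset.univ, deriv (f w) 0 * ((f w 0)⁻¹ * deriv (f w) 0)
        = (4 * Δ^2 * (1/2:ℝ)^n) * (csum (List.ofFn w))^2 := by
      intro w _
      rw [hd0 w, hf0 w]
      have hp : ((1:ℝ)/2)^n ≠ 0 := ne_of_gt hf0pos
      field_simp
      ring
    rw [Finset.sum_congr rfl hstep, ← Finset.mul_sum, sum_csum_sq n]
    have h2n : ((1:ℝ)/2)^n * (2:ℝ)^n = 1 := by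
      rw [← mul_pow]; norm_num
    calc 4 * Δ^2 * (1/2:ℝ)^n * ((n:ℝ) * 2^n)
        = 4 * (n:ℝ) * Δ^2 * ((1/2:ℝ)^n * 2^n) := by ring
      _ = 4 * n * Δ^2 := by rw [h2n, mul_one]
  rw [e1, e2, zero_add, hΔ]
  rw [show π01 + π10 = π10 + π01 from add_comm _ _]
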